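/- Let V, E, C be finite index sets and D₁ : ℝ^V → ℝ^E, D₂ : ℝ^E → ℝ^C, D̄₂ := −D₁ᵀ linear maps with D₂ D₁ = 0. Let W : ℝ^E → ℝ^E and R : ℝ^V → ℝ^C be linear maps satisfying the partial Leibniz rule D₂ W = R D̄₂. Suppose differentiable curves v : ℝ → ℝ^E, h̃ : ℝ → ℝ^V satisfy v′ = −W F(t) − D₁ B(t) and h̃′ = −D̄₂ F(t) for functions F : ℝ → ℝ^E, B : ℝ → ℝ^V, and that D₂ v(0) + f = R h̃(0) for some fixed f ∈ ℝ^C. Then D₂ v(t) + f = R h̃(t) for all t: a uniform potential vorticity field q̃ ≡ 1 remains uniform for all time (PV compatibility / steady geostrophic modes). -/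

import Mathlib

open Matrix

/-- PV compatibility / steady geostrophic modes: with `D₂ D₁ = 0`,
`D̄₂ := −D₁ᵀ`, and the partial Leibniz rule `D₂ W = R D̄₂`, if
`v′ = −W F − D₁ B`, `h̃′ = −D̄₂ F`, and initially `D₂ v(0) + f = R h̃(0)`
(uniform potential vorticity `q̃ ≡ 1`), then `D₂ v(t) + f = R h̃(t)` for all `t`. -/
theorem discrete_pv_compatibility_evolution
    {V E C : Type*} [Fintype V] [Fintype E] [Fintype C]
    (D₁ : Matrix E V ℝ) (D₂ : Matrix C E ℝ) (hDD : D₂ * D₁ = 0)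
    (W : Matrix E E ℝ) (R : Matrix C V ℝ)
    (hLeib : D₂ * W = R * (-D₁ᵀ))
    (v : ℝ → E → ℝ) (ht : ℝ → V → ℝ) (F : ℝ → E → ℝ) (B : ℝ → V → ℝ)
    (hv : ∀ t, HasDerivAt v (-(W *ᵥ F t) - D₁ *ᵥ B t) t)
    (hh : ∀ t, HasDerivAt ht (-((-D₁ᵀ) *ᵥ F t)) t)
    (f : C → ℝ) (h0 : D₂ *ᵥ v 0 + f = R *ᵥ ht 0) :
    ∀ t : ℝ, D₂ *ᵥ v t + f = R *ᵥ ht t := by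
  set L₂ : (E → ℝ) →L[ℝ] (C → ℝ) :=
    LinearMap.toContinuousLinearMap (Matrix.mulVecLin D₂) with hL₂
  set LR : (V → ℝ) →L[ℝ] (C → ℝ) :=
    LinearMap.toContinuousLinearMap (Matrix.mulVecLin R) with hLR
  have key : ∀ t, HasDerivAt (fun s => D₂ *ᵥ v s - R *ᵥ ht s) 0 t := by
    intro t
    have h1 : HasDerivAt (fun s => D₂ *ᵥ v s)
        (D₂ *ᵥ (-(W *ᵥ F t) - D₁ *ᵥ B t)) t :=
      (L₂.hasFDerivAt.comp_hasDerivAt t (hv t))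
    have h2 : HasDerivAt (fun s => R *ᵥ ht s)
        (R *ᵥ (-((-D₁ᵀ) *ᵥ F t))) t :=
      (LR.hasFDerivAt.comp_hasDerivAt t (hh t))
    have := h1.sub h2
    convert this using 1
    · rfl
    · rfl
    · rfl
    · rfl
    rw [Matrix.mulVec_sub, Matrix.mulVec_neg, Matrix.mulVec_neg,
      Matrix.mulVec_mulVec, Matrix.mulVec_mulVec, Matrix.mulVec_mulVec,
      hLeib, hDD, Matrix.zero_mulVec]
    simp [Matrix.mulVec_mulVec]
  have hconst : ∀ t, (D₂ *ᵥ v t - R *ᵥ ht t) = (D₂ *ᵥ v 0 - R *ᵥ ht 0) := by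
    intro t
    exact is_const_of_deriv_eq_zero (fun s => (key s).differentiableAt)
      (fun s => (key s).deriv) t 0
  intro t
  have h0' : D₂ *ᵥ v 0 - R *ᵥ ht 0 = -f := by
    rw [← h0]; abel
  have h := (hconst t).trans h0'
  linear_combination h
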